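/- arXiv:1909.11600 — 8 statements merged into one kernel-verified Lean document; each statement's English description precedes it below -/
import Mathlib

section
/- Let (𝓢, 𝓔) be a set system with positive set costs c_s in which every element belongs to at most f sets of 𝓢. Let w be a fractional packing (nonnegative weights with W(s) = ∑_{e∈s} w(e) ≤ c_s for all s ∈ 𝓢), let α ≥ 1, and let 𝓘 ⊆ 𝓢 be a set cover of 𝓔 such that W(s) ≥ c_s/α for every s ∈ 𝓘. Then c(𝓘) ≤ α f · ∑_{e∈𝓔} w(e), and consequently c(𝓘) ≤ α f · c(𝓙) for every set cover 𝓙 ⊆ 𝓢 of 𝓔. -/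
open Finset

lemma double_count_aux {α : Type*} [DecidableEq α] (𝓔 : Finset α) (w : α → ℝ)
    (T : Finset (Finset α)) (hT : ∀ s ∈ T, s ⊆ 𝓔) :
    ∑ s ∈ T, ∑ e ∈ s, w e = ∑ e ∈ 𝓔, ((T.filter (fun s => e ∈ s)).card : ℝ) * w e := by
  have h1 : ∀ s ∈ T, ∑ e ∈ s, w e = ∑ e ∈ 𝓔, if e ∈ s then w e else 0 := by
    intro s hs
    rw [Finset.sum_ite_mem, Finset.inter_eq_right.mpr (hT s hs)]
  calc ∑ s ∈ T, ∑ e ∈ s, w e = ∑ s ∈ T, ∑ e ∈ 𝓔, if e ∈ s then w e else 0 :=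
        Finset.sum_congr rfl h1
    _ = ∑ e ∈ 𝓔, ∑ s ∈ T, if e ∈ s then w e else 0 := Finset.sum_comm
    _ = ∑ e ∈ 𝓔, ((T.filter (fun s => e ∈ s)).card : ℝ) * w e := by
        refine Finset.sum_congr rfl fun e _ => ?_
        rw [Finset.sum_ite, Finset.sum_const_zero, add_zero, Finset.sum_const, nsmul_eq_mul]

/-- If `w` is a fractional packing, `𝓘 ⊆ 𝓢` is a set cover of `𝓔` all of whose sets `s`
satisfy `W(s) ≥ c_s / a` for some `a ≥ 1`, and every element lies in at most `f` sets,
then `c(𝓘) ≤ a·f·∑_{e∈𝓔} w(e)`, and consequently `c(𝓘) ≤ a·f·c(𝓙)` for every set cover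
`𝓙 ⊆ 𝓢` of `𝓔`. -/
theorem cover_cost_le_of_tight_packing {α : Type*} [DecidableEq α]
    (𝓢 : Finset (Finset α)) (𝓔 : Finset α) (c : Finset α → ℝ)
    (hsub : ∀ s ∈ 𝓢, s ⊆ 𝓔)
    (hc : ∀ s ∈ 𝓢, 0 < c s)
    (f : ℕ)
    (hf : ∀ e ∈ 𝓔, (𝓢.filter (fun s => e ∈ s)).card ≤ f)
    (w : α → ℝ) (hw : ∀ e ∈ 𝓔, 0 ≤ w e)
    (hpack : ∀ s ∈ 𝓢, ∑ e ∈ s, w e ≤ c s)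
    (a : ℝ) (ha : 1 ≤ a)
    (𝓘 : Finset (Finset α)) (h𝓘 : 𝓘 ⊆ 𝓢)
    (hcover𝓘 : ∀ e ∈ 𝓔, ∃ s ∈ 𝓘, e ∈ s)
    (htight : ∀ s ∈ 𝓘, c s / a ≤ ∑ e ∈ s, w e) :
    (∑ s ∈ 𝓘, c s ≤ a * f * ∑ e ∈ 𝓔, w e) ∧
      (∀ 𝓙 : Finset (Finset α), 𝓙 ⊆ 𝓢 → (∀ e ∈ 𝓔, ∃ s ∈ 𝓙, e ∈ s) →
        ∑ s ∈ 𝓘, c s ≤ a * f * ∑ s ∈ 𝓙, c s) := by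
  have ha0 : 0 < a := lt_of_lt_of_le one_pos ha
  have key1 : ∑ s ∈ 𝓘, c s ≤ a * f * ∑ e ∈ 𝓔, w e := by
    calc ∑ s ∈ 𝓘, c s ≤ ∑ s ∈ 𝓘, a * ∑ e ∈ s, w e := by
          refine Finset.sum_le_sum fun s hs => ?_
          have := htight s hs
          rw [div_le_iff₀ ha0] at this
          linarith [this]
      _ = a * ∑ s ∈ 𝓘, ∑ e ∈ s, w e := by rw [Finset.mul_sum]
      _ = a * ∑ e ∈ 𝓔, ((𝓘.filter (fun s => e ∈ s)).card : ℝ) * w e := by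
          rw [double_count_aux 𝓔 w 𝓘 (fun s hs => hsub s (h𝓘 hs))]
      _ ≤ a * ∑ e ∈ 𝓔, (f : ℝ) * w e := by
          refine mul_le_mul_of_nonneg_left (Finset.sum_le_sum fun e he => ?_) ha0.le
          refine mul_le_mul_of_nonneg_right ?_ (hw e he)
          exact_mod_cast le_trans (Finset.card_le_card
            (Finset.filter_subset_filter _ h𝓘)) (hf e he)
      _ = a * f * ∑ e ∈ 𝓔, w e := by rw [← Finset.mul_sum, mul_assoc]
  refine ⟨key1, fun 𝓙 h𝓙 hcov𝓙 => ?_⟩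
  have h2 : ∑ e ∈ 𝓔, w e ≤ ∑ s ∈ 𝓙, c s := by
    calc ∑ e ∈ 𝓔, w e ≤ ∑ e ∈ 𝓔, ((𝓙.filter (fun s => e ∈ s)).card : ℝ) * w e := by
          refine Finset.sum_le_sum fun e he => ?_
          have : 1 ≤ ((𝓙.filter (fun s => e ∈ s)).card : ℝ) := by
            obtain ⟨s, hs, hes⟩ := hcov𝓙 e he
            exact_mod_cast Finset.card_pos.mpr ⟨s, Finset.mem_filter.mpr ⟨hs, hes⟩⟩
          nlinarith [hw e he]
      _ = ∑ s ∈ 𝓙, ∑ e ∈ s, w e := (double_count_aux 𝓔 w 𝓙 (fun s hs => hsub s (h𝓙 hs))).symm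
      _ ≤ ∑ s ∈ 𝓙, c s := Finset.sum_le_sum fun s hs => hpack s (h𝓙 hs)
  calc ∑ s ∈ 𝓘, c s ≤ a * f * ∑ e ∈ 𝓔, w e := key1
    _ ≤ a * f * ∑ s ∈ 𝓙, c s := by
        refine mul_le_mul_of_nonneg_left h2 (by positivity)
end

section
/- Let (𝓢, 𝓔) be a set system with positive set costs c_s in which every element belongs to at most f sets of 𝓢, let ε > 0, let δ ≥ 0, and let w be the uniform weight function with w(e) = δ for all e ∈ 𝓔. Suppose w is a fractional packing on (𝓢, 𝓔) (i.e., ∑_{e∈s} w(e) ≤ c_s for all s ∈ 𝓢), and suppose 𝓘 ⊆ 𝓢 is a set cover of 𝓔 with ∑_{e∈s} w(e) ≥ c_s for every s ∈ 𝓘. Let D ⊆ 𝓔 and 𝓔' = 𝓔 \ D, and assume |D| ≤ ε·|𝓔'|. Then c(𝓘) ≤ (1+ε) f · c(𝓙) for every set cover 𝓙 ⊆ 𝓢 of 𝓔'. -/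
open Finset

/-- Batch deletion with uniform weights: if `w(e) = δ` for all `e ∈ 𝓔` is a fractional
packing, `𝓘 ⊆ 𝓢` is a set cover of `𝓔` consisting of tight sets (`W(s) ≥ c_s`), and at
most an `ε` fraction (relative to `𝓔' = 𝓔 \ D`) of elements is deleted
(`|D| ≤ ε·|𝓔'|`), then `c(𝓘) ≤ (1+ε)·f·c(𝓙)` for every set cover `𝓙 ⊆ 𝓢` of `𝓔'`. -/
theorem batch_deletion_uniform_weights {α : Type*} [DecidableEq α]
    (𝓢 : Finset (Finset α)) (𝓔 : Finset α) (c : Finset α → ℝ)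
    (hsub : ∀ s ∈ 𝓢, s ⊆ 𝓔)
    (hc : ∀ s ∈ 𝓢, 0 < c s)
    (f : ℕ)
    (hf : ∀ e ∈ 𝓔, (𝓢.filter (fun s => e ∈ s)).card ≤ f)
    (ε : ℝ) (hε : 0 < ε)
    (δ : ℝ) (hδ : 0 ≤ δ)
    (w : α → ℝ) (hw : ∀ e ∈ 𝓔, w e = δ)
    (hpack : ∀ s ∈ 𝓢, ∑ e ∈ s, w e ≤ c s)
    (𝓘 : Finset (Finset α)) (h𝓘 : 𝓘 ⊆ 𝓢)
    (hcover𝓘 : ∀ e ∈ 𝓔, ∃ s ∈ 𝓘, e ∈ s)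
    (htight : ∀ s ∈ 𝓘, c s ≤ ∑ e ∈ s, w e)
    (D : Finset α) (hD : D ⊆ 𝓔)
    (hsize : (D.card : ℝ) ≤ ε * ((𝓔 \ D).card : ℝ)) :
    ∀ 𝓙 : Finset (Finset α), 𝓙 ⊆ 𝓢 → (∀ e ∈ 𝓔 \ D, ∃ s ∈ 𝓙, e ∈ s) →
      ∑ s ∈ 𝓘, c s ≤ (1 + ε) * f * ∑ s ∈ 𝓙, c s := by
  intro 𝓙 h𝓙 hcover𝓙
  -- weight of each set in 𝓢 equals δ * card
  have hW : ∀ s ∈ 𝓢, ∑ e ∈ s, w e = δ * s.card := by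
    intro s hs
    have : ∀ e ∈ s, w e = δ := fun e he => hw e (hsub s hs he)
    rw [Finset.sum_congr rfl this, Finset.sum_const, nsmul_eq_mul, mul_comm]
  -- step 1: c(𝓘) ≤ δ * ∑ |s|
  have step1 : ∑ s ∈ 𝓘, c s ≤ δ * ∑ s ∈ 𝓘, (s.card : ℝ) := by
    rw [Finset.mul_sum]
    apply Finset.sum_le_sum
    intro s hs
    calc c s ≤ ∑ e ∈ s, w e := htight s hs
      _ = δ * s.card := hW s (h𝓘 hs)
  -- step 2: double counting
  have step2 : ∑ s ∈ 𝓘, s.card ≤ f * 𝓔.card := by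
    have key : ∑ s ∈ 𝓘, s.card = ∑ e ∈ 𝓔, (𝓘.filter (fun s => e ∈ s)).card := by
      have h1 : ∀ s ∈ 𝓘, s.card = ∑ e ∈ 𝓔, (if e ∈ s then 1 else 0) := by
        intro s hs
        rw [← Finset.card_filter]
        congr 1
        rw [Finset.filter_mem_eq_inter, Finset.inter_eq_right.mpr (hsub s (h𝓘 hs))]
      rw [Finset.sum_congr rfl h1, Finset.sum_comm]
      apply Finset.sum_congr rfl
      intro e _
      rw [Finset.card_filter]
    rw [key, mul_comm]
    calc ∑ e ∈ 𝓔, (𝓘.filter (fun s => e ∈ s)).card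
        ≤ ∑ e ∈ 𝓔, f := by
          apply Finset.sum_le_sum
          intro e he
          exact le_trans (Finset.card_le_card (Finset.filter_subset_filter _ h𝓘)) (hf e he)
      _ = 𝓔.card * f := by rw [Finset.sum_const, smul_eq_mul]
  -- step 3: |𝓔'| ≤ ∑_{s ∈ 𝓙} |s|
  have step3 : ((𝓔 \ D).card : ℝ) ≤ ∑ s ∈ 𝓙, (s.card : ℝ) := by
    have h1 : (𝓔 \ D) ⊆ 𝓙.biUnion id := by
      intro e he
      obtain ⟨s, hs, hes⟩ := hcover𝓙 e he
      exact Finset.mem_biUnion.mpr ⟨s, hs, hes⟩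
    have h2 : (𝓔 \ D).card ≤ ∑ s ∈ 𝓙, s.card :=
      le_trans (Finset.card_le_card h1) (Finset.card_biUnion_le)
    exact_mod_cast h2
  -- step 4: δ * |𝓔'| ≤ c(𝓙)
  have step4 : δ * ((𝓔 \ D).card : ℝ) ≤ ∑ s ∈ 𝓙, c s := by
    calc δ * ((𝓔 \ D).card : ℝ) ≤ δ * ∑ s ∈ 𝓙, (s.card : ℝ) := by
          exact mul_le_mul_of_nonneg_left step3 hδ
      _ = ∑ s ∈ 𝓙, δ * (s.card : ℝ) := by rw [Finset.mul_sum]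
      _ ≤ ∑ s ∈ 𝓙, c s := by
          apply Finset.sum_le_sum
          intro s hs
          rw [← hW s (h𝓙 hs)]
          exact hpack s (h𝓙 hs)
  -- cardinality relation
  have hcard : (𝓔.card : ℝ) = ((𝓔 \ D).card : ℝ) + (D.card : ℝ) := by
    have := Finset.card_sdiff_add_card_eq_card hD
    exact_mod_cast this.symm
  have step2' : ∑ s ∈ 𝓘, (s.card : ℝ) ≤ (f : ℝ) * (𝓔.card : ℝ) := by
    exact_mod_cast step2
  have hfnn : (0:ℝ) ≤ f := Nat.cast_nonneg f
  calc ∑ s ∈ 𝓘, c s ≤ δ * ∑ s ∈ 𝓘, (s.card : ℝ) := step1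
    _ ≤ δ * ((f : ℝ) * (𝓔.card : ℝ)) := mul_le_mul_of_nonneg_left step2' hδ
    _ ≤ δ * ((f : ℝ) * ((1 + ε) * ((𝓔 \ D).card : ℝ))) := by
        apply mul_le_mul_of_nonneg_left _ hδ
        apply mul_le_mul_of_nonneg_left _ hfnn
        rw [hcard]; nlinarith
    _ = (1 + ε) * f * (δ * ((𝓔 \ D).card : ℝ)) := by ring
    _ ≤ (1 + ε) * f * ∑ s ∈ 𝓙, c s := by
        apply mul_le_mul_of_nonneg_left step4
        positivity
end

section
/- Let (𝓢, 𝓔) be a set system with positive set costs c_s in which every element belongs to at most f sets of 𝓢, and let ε > 0. Let w be a fractional packing on (𝓢, 𝓔) (nonnegative weights with ∑_{e∈s} w(e) ≥ 0 and ∑_{e∈s} w(e) ≤ c_s for all s ∈ 𝓢), and let 𝓘 ⊆ 𝓢 be a set cover of 𝓔 with ∑_{e∈s} w(e) ≥ c_s for every s ∈ 𝓘. Let D ⊆ 𝓔 and 𝓔' = 𝓔 \ D, and suppose that for every real x ≥ 0, |{e ∈ D : w(e) > x}| ≤ ε·|{e ∈ 𝓔' : w(e) > x}|. Then ∑_{e∈D}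 w(e) ≤ ε·∑_{e∈𝓔'} w(e), and consequently c(𝓘) ≤ (1+ε) f · c(𝓙) for every set cover 𝓙 ⊆ 𝓢 of 𝓔'. -/
open Finset MeasureTheory

lemma card_eq_sum_indicator' {α : Type*} [DecidableEq α] (w : α → ℝ) (S : Finset α) (x : ℝ) :
    ((S.filter (fun e => x < w e)).card : ℝ)
      = ∑ e ∈ S, (Set.Iio (w e)).indicator (fun _ => (1:ℝ)) x := by
  rw [Finset.card_filter, Nat.cast_sum]
  refine Finset.sum_congr rfl fun e _ => ?_
  by_cases h : x < w e
  · simp [Set.indicator_of_mem, h]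
  · simp [Set.indicator_of_notMem, h]

lemma integ_one' {a : ℝ} :
    IntegrableOn (fun x => (Set.Iio a).indicator (fun _ => (1:ℝ)) x) (Set.Ioi 0) := by
  rw [IntegrableOn, integrable_indicator_iff measurableSet_Iio, IntegrableOn,
    Measure.restrict_restrict measurableSet_Iio]
  have : Set.Iio a ∩ Set.Ioi 0 = Set.Ioo 0 a := by ext y; simp [and_comm]
  rw [this]
  exact integrableOn_const measure_Ioo_lt_top.ne

lemma integ_card' {α : Type*} [DecidableEq α] (w : α → ℝ) (S : Finset α) :
    IntegrableOn (fun x => ((S.filter (fun e => x < w e)).card : ℝ)) (Set.Ioi 0) := by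
  have : (fun x => ((S.filter (fun e => x < w e)).card : ℝ))
      = fun x => ∑ e ∈ S, (Set.Iio (w e)).indicator (fun _ => (1:ℝ)) x := by
    funext x; exact card_eq_sum_indicator' w S x
  rw [this]
  exact integrable_finset_sum _ (fun e _ => integ_one')

lemma sum_eq_integral' {α : Type*} [DecidableEq α] (w : α → ℝ) (S : Finset α)
    (hw : ∀ e ∈ S, 0 ≤ w e) :
    ∑ e ∈ S, w e = ∫ x in Set.Ioi (0:ℝ), ((S.filter (fun e => x < w e)).card : ℝ) := by
  have h1 : ∀ x : ℝ, ((S.filter (fun e => x < w e)).card : ℝ)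
      = ∑ e ∈ S, (Set.Iio (w e)).indicator (fun _ => (1:ℝ)) x := card_eq_sum_indicator' w S
  simp_rw [h1]
  rw [integral_finset_sum _ (fun e _ => integ_one')]
  refine Finset.sum_congr rfl fun e he => ?_
  rw [setIntegral_indicator measurableSet_Iio]
  have : Set.Ioi 0 ∩ Set.Iio (w e) = Set.Ioo 0 (w e) := by ext y; simp
  rw [this, setIntegral_const, measureReal_def, Real.volume_Ioo, smul_eq_mul, mul_one,
    ENNReal.toReal_ofReal_eq_iff.2]
  · ring
  · linarith [hw e he]

lemma double_count' {α : Type*} [DecidableEq α] (w : α → ℝ) (𝓔 : Finset α)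
    (𝓣 : Finset (Finset α)) (h : ∀ s ∈ 𝓣, s ⊆ 𝓔) :
    ∑ s ∈ 𝓣, ∑ e ∈ s, w e
      = ∑ e ∈ 𝓔, ((𝓣.filter (fun s => e ∈ s)).card : ℝ) * w e := by
  have h1 : ∀ s ∈ 𝓣, ∑ e ∈ s, w e = ∑ e ∈ 𝓔, if e ∈ s then w e else 0 := by
    intro s hs
    rw [Finset.sum_ite_mem, Finset.inter_eq_right.2 (h s hs)]
  rw [Finset.sum_congr rfl h1, Finset.sum_comm]
  refine Finset.sum_congr rfl fun e _ => ?_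
  rw [Finset.sum_ite, Finset.sum_const, Finset.sum_const_zero, add_zero, nsmul_eq_mul]

/-- Batch deletion with general weights: if `w` is a fractional packing, `𝓘 ⊆ 𝓢` is a
set cover of `𝓔` consisting of tight sets, and for every `x ≥ 0` we have
`|D_{>x}| ≤ ε·|𝓔'_{>x}|` where `𝓔' = 𝓔 \ D`, then `w(D) ≤ ε·w(𝓔')`, and consequently
`c(𝓘) ≤ (1+ε)·f·c(𝓙)` for every set cover `𝓙 ⊆ 𝓢` of `𝓔'`. -/
theorem batch_deletion_general_weights {α : Type*} [DecidableEq α]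
    (𝓢 : Finset (Finset α)) (𝓔 : Finset α) (c : Finset α → ℝ)
    (hsub : ∀ s ∈ 𝓢, s ⊆ 𝓔)
    (hc : ∀ s ∈ 𝓢, 0 < c s)
    (f : ℕ)
    (hf : ∀ e ∈ 𝓔, (𝓢.filter (fun s => e ∈ s)).card ≤ f)
    (ε : ℝ) (hε : 0 < ε)
    (w : α → ℝ) (hw : ∀ e ∈ 𝓔, 0 ≤ w e)
    (hpack : ∀ s ∈ 𝓢, ∑ e ∈ s, w e ≤ c s)
    (𝓘 : Finset (Finset α)) (h𝓘 : 𝓘 ⊆ 𝓢)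
    (hcover𝓘 : ∀ e ∈ 𝓔, ∃ s ∈ 𝓘, e ∈ s)
    (htight : ∀ s ∈ 𝓘, c s ≤ ∑ e ∈ s, w e)
    (D : Finset α) (hD : D ⊆ 𝓔)
    (hlevel : ∀ x : ℝ, 0 ≤ x →
      ((D.filter (fun e => x < w e)).card : ℝ) ≤
        ε * (((𝓔 \ D).filter (fun e => x < w e)).card : ℝ)) :
    (∑ e ∈ D, w e ≤ ε * ∑ e ∈ 𝓔 \ D, w e) ∧
      (∀ 𝓙 : Finset (Finset α), 𝓙 ⊆ 𝓢 → (∀ e ∈ 𝓔 \ D, ∃ s ∈ 𝓙, e ∈ s) →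
        ∑ s ∈ 𝓘, c s ≤ (1 + ε) * f * ∑ s ∈ 𝓙, c s) := by
  have hpart1 : ∑ e ∈ D, w e ≤ ε * ∑ e ∈ 𝓔 \ D, w e := by
    rw [sum_eq_integral' w D (fun e he => hw e (hD he)),
      sum_eq_integral' w (𝓔 \ D) (fun e he => hw e (Finset.sdiff_subset he))]
    calc ∫ x in Set.Ioi (0:ℝ), ((D.filter (fun e => x < w e)).card : ℝ)
        ≤ ∫ x in Set.Ioi (0:ℝ), ε * (((𝓔 \ D).filter (fun e => x < w e)).card : ℝ) :=
          setIntegral_mono_on (integ_card' w D) ((integ_card' w (𝓔 \ D)).const_mul ε)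
            measurableSet_Ioi (fun x hx => hlevel x (le_of_lt hx))
      _ = ε * ∫ x in Set.Ioi (0:ℝ), (((𝓔 \ D).filter (fun e => x < w e)).card : ℝ) := by
          simp_rw [← smul_eq_mul]
          exact integral_smul ε _
  refine ⟨hpart1, fun 𝓙 h𝓙 hcov => ?_⟩
  have hE'nonneg : (0:ℝ) ≤ ∑ e ∈ 𝓔 \ D, w e :=
    Finset.sum_nonneg fun e he => hw e (Finset.sdiff_subset he)
  have step1 : ∑ s ∈ 𝓘, c s ≤ (f : ℝ) * ∑ e ∈ 𝓔, w e := by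
    calc ∑ s ∈ 𝓘, c s ≤ ∑ s ∈ 𝓘, ∑ e ∈ s, w e := Finset.sum_le_sum htight
      _ = ∑ e ∈ 𝓔, ((𝓘.filter (fun s => e ∈ s)).card : ℝ) * w e :=
          double_count' w 𝓔 𝓘 (fun s hs => hsub s (h𝓘 hs))
      _ ≤ ∑ e ∈ 𝓔, (f : ℝ) * w e := by
          refine Finset.sum_le_sum fun e he => mul_le_mul_of_nonneg_right ?_ (hw e he)
          exact_mod_cast le_trans
            (Finset.card_le_card (Finset.filter_subset_filter _ h𝓘)) (hf e he)
      _ = (f : ℝ) * ∑ e ∈ 𝓔, w e := by rw [Finset.mul_sum]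
  have step2 : ∑ e ∈ 𝓔, w e ≤ (1 + ε) * ∑ e ∈ 𝓔 \ D, w e := by
    have := Finset.sum_sdiff hD (f := w)
    nlinarith [hpart1]
  have step3 : ∑ e ∈ 𝓔 \ D, w e ≤ ∑ s ∈ 𝓙, c s := by
    calc ∑ e ∈ 𝓔 \ D, w e
        ≤ ∑ e ∈ 𝓔 \ D, ((𝓙.filter (fun s => e ∈ s)).card : ℝ) * w e := by
          refine Finset.sum_le_sum fun e he => ?_
          have hpos : 0 < (𝓙.filter (fun s => e ∈ s)).card := by
            obtain ⟨s, hs, hes⟩ := hcov e he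
            exact Finset.card_pos.2 ⟨s, Finset.mem_filter.2 ⟨hs, hes⟩⟩
          have h1 : (1:ℝ) ≤ ((𝓙.filter (fun s => e ∈ s)).card : ℝ) := by exact_mod_cast hpos
          nlinarith [hw e (Finset.sdiff_subset he)]
      _ ≤ ∑ e ∈ 𝓔, ((𝓙.filter (fun s => e ∈ s)).card : ℝ) * w e := by
          refine Finset.sum_le_sum_of_subset_of_nonneg Finset.sdiff_subset fun e he _ =>
            mul_nonneg (Nat.cast_nonneg _) (hw e he)
      _ = ∑ s ∈ 𝓙, ∑ e ∈ s, w e := (double_count' w 𝓔 𝓙 (fun s hs => hsub s (h𝓙 hs))).symm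
      _ ≤ ∑ s ∈ 𝓙, c s := Finset.sum_le_sum fun s hs => hpack s (h𝓙 hs)
  have hJnonneg : (0:ℝ) ≤ ∑ s ∈ 𝓙, c s := le_trans hE'nonneg step3
  have hf0 : (0:ℝ) ≤ (f:ℝ) := Nat.cast_nonneg f
  calc ∑ s ∈ 𝓘, c s ≤ (f : ℝ) * ∑ e ∈ 𝓔, w e := step1
    _ ≤ (f : ℝ) * ((1 + ε) * ∑ e ∈ 𝓔 \ D, w e) := mul_le_mul_of_nonneg_left step2 hf0
    _ ≤ (f : ℝ) * ((1 + ε) * ∑ s ∈ 𝓙, c s) :=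
        mul_le_mul_of_nonneg_left (mul_le_mul_of_nonneg_left step3 (by linarith)) hf0
    _ = (1 + ε) * f * ∑ s ∈ 𝓙, c s := by ring
end

section
/- Let (𝓢, 𝓔) be a set system with positive set costs c_s in which every element belongs to at most f sets of 𝓢, and let ε > 0. Let w be a nonnegative weight function on 𝓔 such that W(s) = ∑_{e∈s} w(e) satisfies 0 ≤ W(s) ≤ c_s for every s ∈ 𝓢, and such that every element e ∈ 𝓔 is contained in at least one tight set, i.e., a set s with (1+ε)^{-1} c_s ≤ W(s) ≤ c_s. Then the collection 𝓢_tight = {s ∈ 𝓢 : (1+ε)^{-1} c_s ≤ W(s) ≤ c_s} is a set cover of 𝓔 and satisfies c(𝓢_tight) ≤ (1+ε) f · c(𝓙) for every set cover 𝓙 ⊆ 𝓢 of 𝓔; that is, 𝓢_tight is a (1+ε)f-approximate minimum set cover of (𝓢, 𝓔). -/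
open Finset

/-- The tight sets `𝓢_tight = {s ∈ 𝓢 : (1+ε)⁻¹ c_s ≤ W(s) ≤ c_s}` form a set cover of
`𝓔` which is a `(1+ε)f`-approximate minimum set cover, provided `0 ≤ W(s) ≤ c_s` for
every `s ∈ 𝓢` and every element is contained in at least one tight set. -/
theorem tight_sets_approx_min_cover {α : Type*} [DecidableEq α]
    (𝓢 : Finset (Finset α)) (𝓔 : Finset α) (c : Finset α → ℝ)
    (hsub : ∀ s ∈ 𝓢, s ⊆ 𝓔)
    (hc : ∀ s ∈ 𝓢, 0 < c s)
    (f : ℕ)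
    (hf : ∀ e ∈ 𝓔, (𝓢.filter (fun s => e ∈ s)).card ≤ f)
    (ε : ℝ) (hε : 0 < ε)
    (w : α → ℝ) (hw : ∀ e ∈ 𝓔, 0 ≤ w e)
    (hpack : ∀ s ∈ 𝓢, ∑ e ∈ s, w e ≤ c s)
    (helem : ∀ e ∈ 𝓔, ∃ s ∈ 𝓢, e ∈ s ∧
      (1 + ε)⁻¹ * c s ≤ ∑ e' ∈ s, w e' ∧ ∑ e' ∈ s, w e' ≤ c s)
    (𝓣 : Finset (Finset α))
    (h𝓣 : ∀ s, s ∈ 𝓣 ↔ s ∈ 𝓢 ∧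
      (1 + ε)⁻¹ * c s ≤ ∑ e' ∈ s, w e' ∧ ∑ e' ∈ s, w e' ≤ c s) :
    (∀ e ∈ 𝓔, ∃ s ∈ 𝓣, e ∈ s) ∧
      (∀ 𝓙 : Finset (Finset α), 𝓙 ⊆ 𝓢 → (∀ e ∈ 𝓔, ∃ s ∈ 𝓙, e ∈ s) →
        ∑ s ∈ 𝓣, c s ≤ (1 + ε) * f * ∑ s ∈ 𝓙, c s) := by
  have h𝓣sub : 𝓣 ⊆ 𝓢 := fun s hs => ((h𝓣 s).1 hs).1
  have hpos : (0:ℝ) < 1 + ε := by linarith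
  constructor
  · intro e he
    obtain ⟨s, hs, hes, h1, h2⟩ := helem e he
    exact ⟨s, (h𝓣 s).2 ⟨hs, h1, h2⟩, hes⟩
  · intro 𝓙 h𝓙sub h𝓙cov
    have key : ∀ (𝓐 : Finset (Finset α)), 𝓐 ⊆ 𝓢 →
        ∑ s ∈ 𝓐, ∑ e ∈ s, w e
          = ∑ e ∈ 𝓔, ((𝓐.filter (fun s => e ∈ s)).card : ℝ) * w e := by
      intro 𝓐 h𝓐
      calc ∑ s ∈ 𝓐, ∑ e ∈ s, w e
          = ∑ s ∈ 𝓐, ∑ e ∈ 𝓔, (if e ∈ s then w e else 0) := by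
            refine Finset.sum_congr rfl fun s hs => ?_
            rw [Finset.sum_ite_mem, Finset.inter_eq_right.2 (hsub s (h𝓐 hs))]
        _ = ∑ e ∈ 𝓔, ∑ s ∈ 𝓐, (if e ∈ s then w e else 0) := Finset.sum_comm
        _ = ∑ e ∈ 𝓔, ((𝓐.filter (fun s => e ∈ s)).card : ℝ) * w e := by
            refine Finset.sum_congr rfl fun e he => ?_
            rw [Finset.sum_ite, Finset.sum_const, Finset.sum_const_zero, add_zero,
              nsmul_eq_mul]
    have hstep1 : ∑ s ∈ 𝓣, c s ≤ (1 + ε) * ∑ s ∈ 𝓣, ∑ e ∈ s, w e := by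
      rw [Finset.mul_sum]
      refine Finset.sum_le_sum fun s hs => ?_
      obtain ⟨_, h1, _⟩ := (h𝓣 s).1 hs
      calc c s = (1 + ε) * ((1 + ε)⁻¹ * c s) := by field_simp
        _ ≤ (1 + ε) * ∑ e ∈ s, w e := by
            exact mul_le_mul_of_nonneg_left h1 hpos.le
    have hstep2 : ∑ s ∈ 𝓣, ∑ e ∈ s, w e ≤ (f : ℝ) * ∑ e ∈ 𝓔, w e := by
      rw [key 𝓣 h𝓣sub, Finset.mul_sum]
      refine Finset.sum_le_sum fun e he => ?_
      refine mul_le_mul_of_nonneg_right ?_ (hw e he)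
      exact_mod_cast le_trans
        (Nat.cast_le.2 (Finset.card_le_card (Finset.filter_subset_filter _ h𝓣sub)))
        (Nat.cast_le.2 (hf e he))
    have hstep3 : ∑ e ∈ 𝓔, w e ≤ ∑ s ∈ 𝓙, c s := by
      have : ∑ e ∈ 𝓔, w e ≤ ∑ s ∈ 𝓙, ∑ e ∈ s, w e := by
        rw [key 𝓙 h𝓙sub]
        refine Finset.sum_le_sum fun e he => ?_
        have hcard : 1 ≤ (𝓙.filter (fun s => e ∈ s)).card := by
          obtain ⟨s, hs, hes⟩ := h𝓙cov e he
          exact Finset.card_pos.2 ⟨s, Finset.mem_filter.2 ⟨hs, hes⟩⟩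
        calc w e = 1 * w e := (one_mul _).symm
          _ ≤ _ := mul_le_mul_of_nonneg_right (by exact_mod_cast hcard) (hw e he)
      exact this.trans (Finset.sum_le_sum fun s hs => hpack s (h𝓙sub hs))
    have hwsum : 0 ≤ ∑ e ∈ 𝓔, w e := Finset.sum_nonneg hw
    calc ∑ s ∈ 𝓣, c s ≤ (1 + ε) * ∑ s ∈ 𝓣, ∑ e ∈ s, w e := hstep1
      _ ≤ (1 + ε) * ((f : ℝ) * ∑ e ∈ 𝓔, w e) :=
          mul_le_mul_of_nonneg_left hstep2 hpos.le
      _ ≤ (1 + ε) * ((f : ℝ) * ∑ s ∈ 𝓙, c s) := by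
          refine mul_le_mul_of_nonneg_left ?_ hpos.le
          exact mul_le_mul_of_nonneg_left hstep3 (Nat.cast_nonneg f)
      _ = (1 + ε) * f * ∑ s ∈ 𝓙, c s := by ring
end

section
/- Let A and D be disjoint finite sets of elements, let ε > 0, let L be a natural number, and let ℓ assign to each element e ∈ A ∪ D a level ℓ(e) ∈ {0, 1, …, L}. Let w be a weight function such that w(e) = (1+ε)^{-ℓ(e)} for every e ∈ A and 0 ≤ w(e) ≤ (1+ε)^{-ℓ(e)} for every e ∈ D. If |{e ∈ D : ℓ(e) ≤ k}| ≤ 2ε·|{e ∈ A : ℓ(e) ≤ k}| for every k ∈ {0, 1, …, L}, then ∑_{e∈D} w(e) ≤ 2ε · ∑_{e∈A} w(e). -/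
open Finset

lemma abel_key {α : Type*} [DecidableEq α] (ε : ℝ) (L : ℕ) (ℓ : α → ℕ)
    (S : Finset α) (hS : ∀ e ∈ S, ℓ e ≤ L) :
    ∑ e ∈ S, ((1 + ε) : ℝ) ^ (-(ℓ e : ℤ)) =
      (1 + ε) ^ (-(L : ℤ)) * S.card +
      ∑ k ∈ range L, (((1 + ε) : ℝ) ^ (-(k : ℤ)) - (1 + ε) ^ (-((k : ℤ) + 1))) *
        ((S.filter (fun e => ℓ e ≤ k)).card : ℝ) := by
  set g : ℕ → ℝ := fun k => (1 + ε) ^ (-(k : ℤ)) with hg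
  have step : ∀ e ∈ S, g (ℓ e) =
      g L + ∑ k ∈ Ico (ℓ e) L, (g k - g (k + 1)) := by
    intro e he
    have h1 : ∑ k ∈ Ico (ℓ e) L, (g k - g (k + 1)) = g (ℓ e) - g L := by
      rw [Finset.sum_Ico_eq_sub _ (hS e he), Finset.sum_range_sub' g,
        Finset.sum_range_sub' g]
      ring
    rw [h1]; ring
  calc ∑ e ∈ S, g (ℓ e)
      = ∑ e ∈ S, (g L + ∑ k ∈ Ico (ℓ e) L, (g k - g (k + 1))) :=
        Finset.sum_congr rfl step
    _ = g L * S.card + ∑ e ∈ S, ∑ k ∈ Ico (ℓ e) L, (g k - g (k + 1)) := by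
        rw [Finset.sum_add_distrib, Finset.sum_const, nsmul_eq_mul, mul_comm]
    _ = g L * S.card + ∑ k ∈ range L, (g k - g (k + 1)) *
          ((S.filter (fun e => ℓ e ≤ k)).card : ℝ) := by
        congr 1
        have hIco : ∀ e : α, Ico (ℓ e) L = (range L).filter (fun k => ℓ e ≤ k) := by
          intro e
          ext k
          simp [Finset.mem_Ico, Finset.mem_filter, Finset.mem_range, and_comm]
        calc ∑ e ∈ S, ∑ k ∈ Ico (ℓ e) L, (g k - g (k + 1))
            = ∑ e ∈ S, ∑ k ∈ range L, (if ℓ e ≤ k then g k - g (k + 1) else 0) := by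
              refine Finset.sum_congr rfl fun e _ => ?_
              rw [hIco e, Finset.sum_filter]
          _ = ∑ k ∈ range L, ∑ e ∈ S, (if ℓ e ≤ k then g k - g (k + 1) else 0) :=
              Finset.sum_comm
          _ = ∑ k ∈ range L, (g k - g (k + 1)) *
                ((S.filter (fun e => ℓ e ≤ k)).card : ℝ) := by
              refine Finset.sum_congr rfl fun k _ => ?_
              rw [← Finset.sum_filter, Finset.sum_const, nsmul_eq_mul, mul_comm]
  

/-- Level-wise comparison of dead and active weights: if each active element `e ∈ A` has
weight exactly `(1+ε)^{-ℓ(e)}`, each dead element `e ∈ D` has weight at most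
`(1+ε)^{-ℓ(e)}`, and for every level `k ≤ L` we have `|D_{≤k}| ≤ 2ε·|A_{≤k}|`, then
`w(D) ≤ 2ε·w(A)`. -/
theorem dead_weight_le_active_weight {α : Type*} [DecidableEq α]
    (A D : Finset α) (hAD : Disjoint A D)
    (ε : ℝ) (hε : 0 < ε)
    (L : ℕ) (ℓ : α → ℕ) (hℓ : ∀ e ∈ A ∪ D, ℓ e ≤ L)
    (w : α → ℝ)
    (hwA : ∀ e ∈ A, w e = (1 + ε) ^ (-(ℓ e : ℤ)))
    (hwD : ∀ e ∈ D, 0 ≤ w e ∧ w e ≤ (1 + ε) ^ (-(ℓ e : ℤ)))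
    (hcount : ∀ k : ℕ, k ≤ L →
      ((D.filter (fun e => ℓ e ≤ k)).card : ℝ) ≤
        2 * ε * ((A.filter (fun e => ℓ e ≤ k)).card : ℝ)) :
    ∑ e ∈ D, w e ≤ 2 * ε * ∑ e ∈ A, w e := by
  have h1ε : (0:ℝ) < 1 + ε := by linarith
  have hA : ∀ e ∈ A, ℓ e ≤ L := fun e he => hℓ e (Finset.mem_union_left _ he)
  have hD : ∀ e ∈ D, ℓ e ≤ L := fun e he => hℓ e (Finset.mem_union_right _ he)
  have hdnn : ∀ k : ℕ, (0:ℝ) ≤ (1 + ε) ^ (-(k : ℤ)) - (1 + ε) ^ (-((k : ℤ) + 1)) := by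
    intro k
    have h := zpow_le_zpow_right₀ (by linarith : (1:ℝ) ≤ 1 + ε)
      (by linarith : -((k:ℤ)+1) ≤ -(k:ℤ))
    linarith
  have hDle : ∑ e ∈ D, w e ≤ ∑ e ∈ D, ((1 + ε) : ℝ) ^ (-(ℓ e : ℤ)) :=
    Finset.sum_le_sum fun e he => (hwD e he).2
  have hAeq : ∑ e ∈ A, w e = ∑ e ∈ A, ((1 + ε) : ℝ) ^ (-(ℓ e : ℤ)) :=
    Finset.sum_congr rfl hwA
  have keyD := abel_key ε L ℓ D hD
  have keyA := abel_key ε L ℓ A hA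
  have hDL : (D.card : ℝ) = ((D.filter (fun e => ℓ e ≤ L)).card : ℝ) := by
    rw [Finset.filter_true_of_mem hD]
  have hAL : (A.card : ℝ) = ((A.filter (fun e => ℓ e ≤ L)).card : ℝ) := by
    rw [Finset.filter_true_of_mem hA]
  have hgL : (0:ℝ) ≤ (1 + ε) ^ (-(L : ℤ)) := by positivity
  calc ∑ e ∈ D, w e ≤ ∑ e ∈ D, ((1 + ε) : ℝ) ^ (-(ℓ e : ℤ)) := hDle
    _ = (1 + ε) ^ (-(L : ℤ)) * D.card +
        ∑ k ∈ range L, (((1 + ε) : ℝ) ^ (-(k : ℤ)) - (1 + ε) ^ (-((k : ℤ) + 1))) *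
          ((D.filter (fun e => ℓ e ≤ k)).card : ℝ) := keyD
    _ ≤ (1 + ε) ^ (-(L : ℤ)) * (2 * ε * ((A.filter (fun e => ℓ e ≤ L)).card : ℝ)) +
        ∑ k ∈ range L, (((1 + ε) : ℝ) ^ (-(k : ℤ)) - (1 + ε) ^ (-((k : ℤ) + 1))) *
          (2 * ε * ((A.filter (fun e => ℓ e ≤ k)).card : ℝ)) := by
        gcongr with k hk
        · rw [hDL]; exact hcount L le_rfl
        · exact hdnn k
        · exact hcount k (le_of_lt (Finset.mem_range.mp hk))
    _ = 2 * ε * ((1 + ε) ^ (-(L : ℤ)) * A.card +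
        ∑ k ∈ range L, (((1 + ε) : ℝ) ^ (-(k : ℤ)) - (1 + ε) ^ (-((k : ℤ) + 1))) *
          ((A.filter (fun e => ℓ e ≤ k)).card : ℝ)) := by
        rw [mul_add, Finset.mul_sum, ← hAL]
        congr 1
        · ring
        · exact Finset.sum_congr rfl fun k _ => by ring
    _ = 2 * ε * ∑ e ∈ A, w e := by rw [hAeq, keyA]
end

section
/- Let 𝓢 be a finite collection of sets over a finite universe 𝓔* of elements, with positive set costs c_s, in which every element belongs to at most f sets of 𝓢, and let ε > 0. Let w be a nonnegative weight function on 𝓔* and write W*(s) = ∑_{e∈s} w(e). Suppose every element e ∈ 𝓔* is contained in at least one set s with (1+ε)^{-1} c_s ≤ W*(s) ≤ c_s. Then ∑_{e∈𝓔*} w(e) ≥ ((1+ε) f)^{-1} · c(𝓢*_tight), where 𝓢*_tight = {s ∈ 𝓢 : (1+ε)^{-1} c_s ≤ W*(s) ≤ c_s}. -/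
open Finset

/-- If every element of `𝓔*` is contained in at least one tight set (a set `s` with
`(1+ε)⁻¹ c_s ≤ W*(s) ≤ c_s`), then the total element weight is at least
`((1+ε)·f)⁻¹` times the cost of the collection of tight sets. -/
theorem total_weight_ge_tight_cost {α : Type*} [DecidableEq α]
    (𝓢 : Finset (Finset α)) (𝓔star : Finset α) (c : Finset α → ℝ)
    (hsub : ∀ s ∈ 𝓢, s ⊆ 𝓔star)
    (hc : ∀ s ∈ 𝓢, 0 < c s)
    (f : ℕ)
    (hf : ∀ e ∈ 𝓔star, (𝓢.filter (fun s => e ∈ s)).card ≤ f)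
    (ε : ℝ) (hε : 0 < ε)
    (w : α → ℝ) (hw : ∀ e ∈ 𝓔star, 0 ≤ w e)
    (helem : ∀ e ∈ 𝓔star, ∃ s ∈ 𝓢, e ∈ s ∧
      (1 + ε)⁻¹ * c s ≤ ∑ e' ∈ s, w e' ∧ ∑ e' ∈ s, w e' ≤ c s)
    (𝓣 : Finset (Finset α))
    (h𝓣 : ∀ s, s ∈ 𝓣 ↔ s ∈ 𝓢 ∧
      (1 + ε)⁻¹ * c s ≤ ∑ e' ∈ s, w e' ∧ ∑ e' ∈ s, w e' ≤ c s) :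
    ((1 + ε) * f)⁻¹ * ∑ s ∈ 𝓣, c s ≤ ∑ e ∈ 𝓔star, w e := by
  have h𝓣sub : 𝓣 ⊆ 𝓢 := fun s hs => ((h𝓣 s).1 hs).1
  have hεpos : (0:ℝ) < 1 + ε := by linarith
  have hwsum : 0 ≤ ∑ e ∈ 𝓔star, w e := Finset.sum_nonneg hw
  have swap : ∑ s ∈ 𝓣, ∑ e ∈ s, w e
      = ∑ e ∈ 𝓔star, ((𝓣.filter (fun s => e ∈ s)).card : ℝ) * w e := by
    have h1 : ∀ s ∈ 𝓣, ∑ e ∈ s, w e = ∑ e ∈ 𝓔star, if e ∈ s then w e else 0 := by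
      intro s hs
      rw [Finset.sum_ite_mem, Finset.inter_eq_right.mpr (hsub s (h𝓣sub hs))]
    rw [Finset.sum_congr rfl h1, Finset.sum_comm]
    refine Finset.sum_congr rfl fun e _ => ?_
    rw [← Finset.sum_filter, Finset.sum_const, nsmul_eq_mul]
  have hinner : ∑ s ∈ 𝓣, ∑ e ∈ s, w e ≤ (f : ℝ) * ∑ e ∈ 𝓔star, w e := by
    rw [swap, Finset.mul_sum]
    refine Finset.sum_le_sum fun e he => ?_
    have hcard : (𝓣.filter (fun s => e ∈ s)).card ≤ f :=
      le_trans (Finset.card_le_card (Finset.filter_subset_filter _ h𝓣sub)) (hf e he)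
    exact mul_le_mul_of_nonneg_right (by exact_mod_cast hcard) (hw e he)
  have key : ∑ s ∈ 𝓣, c s ≤ (1 + ε) * f * ∑ e ∈ 𝓔star, w e := by
    calc ∑ s ∈ 𝓣, c s ≤ ∑ s ∈ 𝓣, (1 + ε) * ∑ e' ∈ s, w e' := by
          refine Finset.sum_le_sum fun s hs => ?_
          have h := ((h𝓣 s).1 hs).2.1
          calc c s = (1 + ε) * ((1 + ε)⁻¹ * c s) := by field_simp
            _ ≤ (1 + ε) * ∑ e' ∈ s, w e' := by
                exact mul_le_mul_of_nonneg_left h hεpos.le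
      _ = (1 + ε) * ∑ s ∈ 𝓣, ∑ e' ∈ s, w e' := (Finset.mul_sum _ _ _).symm
      _ ≤ (1 + ε) * ((f : ℝ) * ∑ e ∈ 𝓔star, w e) :=
          mul_le_mul_of_nonneg_left hinner hεpos.le
      _ = (1 + ε) * f * ∑ e ∈ 𝓔star, w e := by ring
  rcases Nat.eq_zero_or_pos f with hf0 | hfpos
  · simp [hf0, hwsum]
  · have hpos : (0:ℝ) < (1 + ε) * f := by
      have : (0:ℝ) < (f : ℝ) := by exact_mod_cast hfpos
      positivity
    rw [inv_mul_le_iff₀ hpos]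
    exact key.trans_eq (by ring)
end

section
/- Let 𝓢 be a finite collection of sets over a finite universe 𝓔* = A ⊎ P ⊎ D (a disjoint union of active, passive and dead elements), with positive set costs c_s, in which every element belongs to at most f sets of 𝓢, and let ε > 0. Let w be a nonnegative weight function on 𝓔* with W*(s) = ∑_{e∈s} w(e), and suppose: (i) every element e ∈ 𝓔* is contained in at least one set s with (1+ε)^{-1} c_s ≤ W*(s) ≤ c_s, and (ii) ∑_{e∈D} w(e) ≤ 2ε·∑_{e∈A} w(e). Then ∑_{e∈A∪P} w(e) ≥ ((1+ε)(1+2ε) f)^{-1} · c(𝓢*_tight), where 𝓢*_tight = {s ∈ 𝓢 : (1+ε)^{-1} c_s ≤ W*(s) ≤ c_s}. -/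
open Finset

/-- If `𝓔* = A ⊎ P ⊎ D`, every element of `𝓔*` lies in some tight set, and the total
dead weight satisfies `w(D) ≤ 2ε·w(A)`, then the weight of the actual elements `A ∪ P`
is at least `((1+ε)(1+2ε)·f)⁻¹` times the cost of the tight sets. -/
theorem actual_weight_ge_tight_cost {α : Type*} [DecidableEq α]
    (𝓢 : Finset (Finset α)) (A P D : Finset α)
    (hAP : Disjoint A P) (hAD : Disjoint A D) (hPD : Disjoint P D)
    (c : Finset α → ℝ)
    (hsub : ∀ s ∈ 𝓢, s ⊆ A ∪ P ∪ D)
    (hc : ∀ s ∈ 𝓢, 0 < c s)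
    (f : ℕ)
    (hf : ∀ e ∈ A ∪ P ∪ D, (𝓢.filter (fun s => e ∈ s)).card ≤ f)
    (ε : ℝ) (hε : 0 < ε)
    (w : α → ℝ) (hw : ∀ e ∈ A ∪ P ∪ D, 0 ≤ w e)
    (helem : ∀ e ∈ A ∪ P ∪ D, ∃ s ∈ 𝓢, e ∈ s ∧
      (1 + ε)⁻¹ * c s ≤ ∑ e' ∈ s, w e' ∧ ∑ e' ∈ s, w e' ≤ c s)
    (hdead : ∑ e ∈ D, w e ≤ 2 * ε * ∑ e ∈ A, w e)
    (𝓣 : Finset (Finset α))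
    (h𝓣 : ∀ s, s ∈ 𝓣 ↔ s ∈ 𝓢 ∧
      (1 + ε)⁻¹ * c s ≤ ∑ e' ∈ s, w e' ∧ ∑ e' ∈ s, w e' ≤ c s) :
    ((1 + ε) * (1 + 2 * ε) * f)⁻¹ * ∑ s ∈ 𝓣, c s ≤ ∑ e ∈ A ∪ P, w e := by
  have hwAP : ∀ e ∈ A ∪ P, 0 ≤ w e := fun e he =>
    hw e (Finset.mem_union_left _ he)
  have hWAP : 0 ≤ ∑ e ∈ A ∪ P, w e := Finset.sum_nonneg hwAP
  rcases Nat.eq_zero_or_pos f with hf0 | hfpos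
  · simpa [hf0] using hWAP
  have h1 : (0:ℝ) < 1 + ε := by linarith
  have h2 : (0:ℝ) < 1 + 2*ε := by linarith
  have hfR : (0:ℝ) < (f:ℝ) := Nat.cast_pos.mpr hfpos
  have hK : (0:ℝ) < (1+ε)*(1+2*ε)*(f:ℝ) := by positivity
  rw [inv_mul_le_iff₀ hK]
  -- Step 1
  have step1 : ∑ s ∈ 𝓣, c s ≤ (1+ε) * ∑ s ∈ 𝓣, ∑ e ∈ s, w e := by
    rw [Finset.mul_sum]
    apply Finset.sum_le_sum
    intro s hs
    obtain ⟨_, hlo, _⟩ := (h𝓣 s).1 hs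
    have : c s = (1+ε) * ((1+ε)⁻¹ * c s) := by field_simp
    rw [this]
    exact mul_le_mul_of_nonneg_left hlo (le_of_lt h1)
  -- Step 2
  have key : ∀ s ∈ 𝓣, ∑ e ∈ s, w e
      = ∑ e ∈ A ∪ P ∪ D, if e ∈ s then w e else 0 := by
    intro s hs
    rw [Finset.sum_ite_mem,
      Finset.inter_eq_right.mpr (hsub s ((h𝓣 s).1 hs).1)]
  have step2 : ∑ s ∈ 𝓣, ∑ e ∈ s, w e ≤ (f:ℝ) * ∑ e ∈ A ∪ P ∪ D, w e := by
    rw [Finset.sum_congr rfl key, Finset.sum_comm, Finset.mul_sum]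
    apply Finset.sum_le_sum
    intro e he
    rw [← Finset.sum_filter, Finset.sum_const, nsmul_eq_mul]
    have hcard : ((𝓣.filter (fun s => e ∈ s)).card : ℝ) ≤ (f:ℝ) := by
      have hsub' : 𝓣.filter (fun s => e ∈ s) ⊆ 𝓢.filter (fun s => e ∈ s) :=
        Finset.filter_subset_filter _ (fun s hs => ((h𝓣 s).1 hs).1)
      exact_mod_cast le_trans (Finset.card_le_card hsub') (hf e he)
    exact mul_le_mul_of_nonneg_right hcard (hw e he)
  -- Step 3
  have hsplit : ∑ e ∈ A ∪ P ∪ D, w e = ∑ e ∈ A ∪ P, w e + ∑ e ∈ D, w e := by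
    rw [Finset.sum_union (Finset.disjoint_union_left.mpr ⟨hAD, hPD⟩)]
  have hA : ∑ e ∈ A ∪ P, w e = ∑ e ∈ A, w e + ∑ e ∈ P, w e :=
    Finset.sum_union hAP
  have hPnn : 0 ≤ ∑ e ∈ P, w e :=
    Finset.sum_nonneg fun e he => hw e (by simp [he])
  have hEle : ∑ e ∈ A ∪ P ∪ D, w e ≤ (1+2*ε) * ∑ e ∈ A ∪ P, w e := by
    rw [hsplit]
    nlinarith [hdead, hA, hPnn, hε.le]
  calc ∑ s ∈ 𝓣, c s ≤ (1+ε) * ∑ s ∈ 𝓣, ∑ e ∈ s, w e := step1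
    _ ≤ (1+ε) * ((f:ℝ) * ∑ e ∈ A ∪ P ∪ D, w e) :=
        mul_le_mul_of_nonneg_left step2 h1.le
    _ ≤ (1+ε) * ((f:ℝ) * ((1+2*ε) * ∑ e ∈ A ∪ P, w e)) :=
        mul_le_mul_of_nonneg_left
          (mul_le_mul_of_nonneg_left hEle hfR.le) h1.le
    _ = (1+ε) * (1+2*ε) * (f:ℝ) * ∑ e ∈ A ∪ P, w e := by ring
end

section
/- Let 𝓢 be a finite collection of sets over a finite universe of elements with positive set costs c_s, in which every element belongs to at most f sets of 𝓢, and let 0 < ε < 1/2. Let the current elements be 𝓔 = A ⊎ P and the dead elements D (disjoint from 𝓔), and set 𝓔* = 𝓔 ∪ D. Let L be a natural number and ℓ a level function assigning each element of 𝓔* a level in {0,…,L}. Let w be a weight function on 𝓔* with W*(s) = ∑_{e∈s∩𝓔*} w(e) and W(s) = ∑_{e∈s∩𝓔} w(e), and suppose: (Invariant 1) w(e) = (1+ε)^{-ℓ(e)} for every e ∈ A, and 0 ≤ w(e) ≤ (1+ε)^{-ℓ(e)} for every e ∈ P ∪ D; (Invariant 2) 0 ≤ W*(s) ≤ c_s for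 every s ∈ 𝓢; (Invariant 3) every element e ∈ 𝓔 ∪ D is contained in at least one set s with (1+ε)^{-1} c_s ≤ W*(s) ≤ c_s; and moreover |{e ∈ D : ℓ(e) ≤ j}| ≤ 2ε·|{e ∈ A : ℓ(e) ≤ j}| for every j ∈ {0,…,L}. Then the collection 𝓢*_tight = {s ∈ 𝓢 : (1+ε)^{-1} c_s ≤ W*(s) ≤ c_s} is a set cover of 𝓔, and c(𝓢*_tight) ≤ (1+5ε) f · c(𝓙) for every set cover 𝓙 ⊆ 𝓢 of 𝓔; that is, 𝓢*_tight is a (1+5ε)f-approximate minimum set cover of (𝓢, 𝓔). -/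
open Finset

/-- Double counting: sum over sets of set-weights equals weighted count over the universe. -/
lemma count_swap {α : Type*} [DecidableEq α] (𝓕 : Finset (Finset α)) (U : Finset α)
    (hsub : ∀ s ∈ 𝓕, s ⊆ U) (w : α → ℝ) :
    ∑ s ∈ 𝓕, ∑ e ∈ s, w e
      = ∑ e ∈ U, ((𝓕.filter (fun s => e ∈ s)).card : ℝ) * w e := by
  have h1 : ∑ s ∈ 𝓕, ∑ e ∈ s, w e = ∑ s ∈ 𝓕, ∑ e ∈ U, if e ∈ s then w e else 0 := by
    refine Finset.sum_congr rfl fun s hs => ?_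
    rw [Finset.sum_ite_mem, Finset.inter_eq_right.mpr (hsub s hs)]
  rw [h1, Finset.sum_comm]
  refine Finset.sum_congr rfl fun e he => ?_
  rw [← Finset.sum_filter, Finset.sum_const, nsmul_eq_mul]

/-- Abel summation / layer-cake identity for level sums. -/
lemma abel_sum {α : Type*} (S : Finset α) (ℓ : α → ℕ) (L : ℕ) (hS : ∀ e ∈ S, ℓ e ≤ L)
    (g : ℕ → ℝ) :
    ∑ e ∈ S, g (ℓ e)
      = (S.card : ℝ) * g L
        + ∑ j ∈ Finset.range L, (g j - g (j + 1)) * ((S.filter fun e => ℓ e ≤ j).card : ℝ) := by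
  have key : ∀ e ∈ S, g (ℓ e)
      = g L + ∑ j ∈ Finset.range L, (if ℓ e ≤ j then g j - g (j + 1) else 0) := by
    intro e he
    have hle := hS e he
    have h2 : (Finset.range L).filter (fun j => ℓ e ≤ j) = Finset.Ico (ℓ e) L := by
      ext j; simp [Finset.mem_Ico, and_comm]
    rw [← Finset.sum_filter, h2,
      Finset.sum_Ico_eq_sum_range (fun j => g j - g (j + 1)) (ℓ e) L]
    have h3 : ∑ i ∈ Finset.range (L - ℓ e), (g (ℓ e + i) - g (ℓ e + i + 1))
        = g (ℓ e) - g L := by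
      have h4 := Finset.sum_range_sub' (fun i => g (ℓ e + i)) (L - ℓ e)
      have h5 : ℓ e + (L - ℓ e) = L := Nat.add_sub_cancel' hle
      simp only [add_zero, h5] at h4
      rw [← h4]
      exact Finset.sum_congr rfl fun i _ => by ring_nf
    rw [h3]; ring
  rw [Finset.sum_congr rfl key, Finset.sum_add_distrib, Finset.sum_const, nsmul_eq_mul,
    Finset.sum_comm]
  congr 1
  refine Finset.sum_congr rfl fun j hj => ?_
  rw [← Finset.sum_filter, Finset.sum_const, nsmul_eq_mul, mul_comm]

/-- The layer-cake comparison: cumulative counts bound gives weighted-sum bound for an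
antitone nonnegative weight function of the level. -/
lemma dead_le {α : Type*} [DecidableEq α] (Aset Dset : Finset α) (ℓ : α → ℕ) (L : ℕ)
    (hA : ∀ e ∈ Aset, ℓ e ≤ L) (hD : ∀ e ∈ Dset, ℓ e ≤ L)
    (g : ℕ → ℝ) (hg0 : ∀ j, 0 ≤ g j) (hmono : ∀ j, g (j + 1) ≤ g j)
    (ε : ℝ) (hε : 0 ≤ ε)
    (hcount : ∀ j : ℕ, j ≤ L →
      ((Dset.filter fun e => ℓ e ≤ j).card : ℝ) ≤
        2 * ε * ((Aset.filter fun e => ℓ e ≤ j).card : ℝ)) :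
    ∑ e ∈ Dset, g (ℓ e) ≤ 2 * ε * ∑ e ∈ Aset, g (ℓ e) := by
  rw [abel_sum Dset ℓ L hD g, abel_sum Aset ℓ L hA g, mul_add, Finset.mul_sum]
  refine add_le_add ?_ (Finset.sum_le_sum fun j hj => ?_)
  · have hL := hcount L le_rfl
    rw [Finset.filter_true_of_mem (fun e he => hD e he),
      Finset.filter_true_of_mem (fun e he => hA e he)] at hL
    have := mul_le_mul_of_nonneg_right hL (hg0 L)
    linarith [this]
  · have hcj := hcount j (le_of_lt (Finset.mem_range.mp hj))
    have hgj : 0 ≤ g j - g (j + 1) := by linarith [hmono j]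
    nlinarith [mul_nonneg hgj (sub_nonneg.mpr hcj)]

/-- Main approximation guarantee of the dynamic algorithm: under Invariants 1–3 of the
hierarchical partition on the shadow input `𝓔* = 𝓔 ∪ D` (with `𝓔 = A ⊎ P`), together
with the level-wise bound `|D_{≤j}| ≤ 2ε·|A_{≤j}|` for all `j ≤ L`, the collection of
tight sets `𝓢*_tight = {s ∈ 𝓢 : (1+ε)⁻¹ c_s ≤ W*(s) ≤ c_s}` is a set cover of `𝓔` and
is a `(1+5ε)f`-approximate minimum set cover of `(𝓢, 𝓔)`. -/
theorem dynamic_tight_sets_approx_min_cover {α : Type*} [DecidableEq α]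
    (𝓢 : Finset (Finset α)) (A P D : Finset α)
    (hAP : Disjoint A P) (hAD : Disjoint A D) (hPD : Disjoint P D)
    (c : Finset α → ℝ)
    (hsub : ∀ s ∈ 𝓢, s ⊆ A ∪ P ∪ D)
    (hc : ∀ s ∈ 𝓢, 0 < c s)
    (f : ℕ)
    (hf : ∀ e ∈ A ∪ P ∪ D, (𝓢.filter (fun s => e ∈ s)).card ≤ f)
    (ε : ℝ) (hε : 0 < ε) (hε' : ε < 1 / 2)
    (L : ℕ) (ℓ : α → ℕ) (hℓ : ∀ e ∈ A ∪ P ∪ D, ℓ e ≤ L)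
    (w : α → ℝ)
    -- Invariant 1
    (hwA : ∀ e ∈ A, w e = (1 + ε) ^ (-(ℓ e : ℤ)))
    (hwPD : ∀ e ∈ P ∪ D, 0 ≤ w e ∧ w e ≤ (1 + ε) ^ (-(ℓ e : ℤ)))
    -- Invariant 2
    (hpack : ∀ s ∈ 𝓢, 0 ≤ ∑ e ∈ s, w e ∧ ∑ e ∈ s, w e ≤ c s)
    -- Invariant 3
    (helem : ∀ e ∈ A ∪ P ∪ D, ∃ s ∈ 𝓢, e ∈ s ∧
      (1 + ε)⁻¹ * c s ≤ ∑ e' ∈ s, w e' ∧ ∑ e' ∈ s, w e' ≤ c s)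
    -- level-wise bound on dead elements
    (hcount : ∀ j : ℕ, j ≤ L →
      ((D.filter (fun e => ℓ e ≤ j)).card : ℝ) ≤
        2 * ε * ((A.filter (fun e => ℓ e ≤ j)).card : ℝ))
    (𝓣 : Finset (Finset α))
    (h𝓣 : ∀ s, s ∈ 𝓣 ↔ s ∈ 𝓢 ∧
      (1 + ε)⁻¹ * c s ≤ ∑ e' ∈ s, w e' ∧ ∑ e' ∈ s, w e' ≤ c s) :
    (∀ e ∈ A ∪ P, ∃ s ∈ 𝓣, e ∈ s) ∧
      (∀ 𝓙 : Finset (Finset α), 𝓙 ⊆ 𝓢 → (∀ e ∈ A ∪ P, ∃ s ∈ 𝓙, e ∈ s) →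
        ∑ s ∈ 𝓣, c s ≤ (1 + 5 * ε) * f * ∑ s ∈ 𝓙, c s) := by
  have h1ε : (0:ℝ) < 1 + ε := by linarith
  have hwnn : ∀ e ∈ A ∪ P ∪ D, 0 ≤ w e := by
    intro e he
    rcases Finset.mem_union.mp he with he' | heD
    · rcases Finset.mem_union.mp he' with heA | heP
      · rw [hwA e heA]; exact (zpow_pos h1ε _).le
      · exact (hwPD e (Finset.mem_union_left _ heP)).1
    · exact (hwPD e (Finset.mem_union_right _ heD)).1
  have h𝓣S : 𝓣 ⊆ 𝓢 := fun s hs => ((h𝓣 s).mp hs).1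
  constructor
  · intro e he
    obtain ⟨s, hs, hes, ht⟩ := helem e (Finset.mem_union_left _ he)
    exact ⟨s, (h𝓣 s).mpr ⟨hs, ht⟩, hes⟩
  · intro 𝓙 h𝓙S h𝓙cov
    set C := ∑ s ∈ 𝓙, c s with hCdef
    have hC : 0 ≤ C := Finset.sum_nonneg fun s hs => (hc s (h𝓙S hs)).le
    have hf0 : (0:ℝ) ≤ (f : ℝ) := Nat.cast_nonneg f
    -- Step 1: tight sets' cost is at most (1+ε) times their weight
    have h1 : ∑ s ∈ 𝓣, c s ≤ (1 + ε) * ∑ s ∈ 𝓣, ∑ e ∈ s, w e := by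
      rw [Finset.mul_sum]
      refine Finset.sum_le_sum fun s hs => ?_
      obtain ⟨_, hlow, _⟩ := (h𝓣 s).mp hs
      calc c s = (1 + ε) * ((1 + ε)⁻¹ * c s) := by field_simp
        _ ≤ (1 + ε) * ∑ e ∈ s, w e := mul_le_mul_of_nonneg_left hlow h1ε.le
    -- Step 2: double counting with max frequency f
    have h2 : ∑ s ∈ 𝓣, ∑ e ∈ s, w e ≤ (f : ℝ) * ∑ e ∈ A ∪ P ∪ D, w e := by
      rw [count_swap 𝓣 (A ∪ P ∪ D) (fun s hs => hsub s (h𝓣S hs)) w, Finset.mul_sum]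
      refine Finset.sum_le_sum fun e he => ?_
      have hcard : ((𝓣.filter (fun s => e ∈ s)).card : ℝ) ≤ (f : ℝ) := by
        exact_mod_cast le_trans (Finset.card_le_card
          (Finset.filter_subset_filter _ h𝓣S)) (hf e he)
      exact mul_le_mul_of_nonneg_right hcard (hwnn e he)
    -- Step 3: total weight of actual elements is at most the cost of any cover 𝓙
    have hcov : ∑ e ∈ A ∪ P, w e ≤ C := by
      have hsub' : A ∪ P ⊆ A ∪ P ∪ D := Finset.subset_union_left
      have hstep : ∑ e ∈ A ∪ P, w e
          ≤ ∑ e ∈ A ∪ P ∪ D, ((𝓙.filter fun s => e ∈ s).card : ℝ) * w e := by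
        refine le_trans (Finset.sum_le_sum fun e he => ?_)
          (Finset.sum_le_sum_of_subset_of_nonneg hsub'
            fun e he _ => mul_nonneg (Nat.cast_nonneg _) (hwnn e he))
        obtain ⟨s, hs, hes⟩ := h𝓙cov e he
        have hpos : 0 < (𝓙.filter fun s => e ∈ s).card :=
          Finset.card_pos.mpr ⟨s, Finset.mem_filter.mpr ⟨hs, hes⟩⟩
        have hone : (1:ℝ) ≤ ((𝓙.filter fun s => e ∈ s).card : ℝ) := by exact_mod_cast hpos
        exact le_mul_of_one_le_left (hwnn e (hsub' he)) hone
      rw [← count_swap 𝓙 (A ∪ P ∪ D) (fun s hs => hsub s (h𝓙S hs)) w] at hstep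
      exact le_trans hstep (Finset.sum_le_sum fun s hs => (hpack s (h𝓙S hs)).2)
    have hAw : ∑ e ∈ A, w e ≤ C := by
      refine le_trans ?_ hcov
      exact Finset.sum_le_sum_of_subset_of_nonneg Finset.subset_union_left
        fun e he _ => hwnn e (Finset.mem_union_left _ he)
    -- Step 4: dead weight is at most 2ε times active weight
    have hDw : ∑ e ∈ D, w e ≤ 2 * ε * ∑ e ∈ A, w e := by
      set g : ℕ → ℝ := fun j => (1 + ε) ^ (-(j : ℤ)) with hgdef
      have hg0 : ∀ j, 0 ≤ g j := fun j => (zpow_pos h1ε _).le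
      have hmono : ∀ j, g (j + 1) ≤ g j := by
        intro j
        apply zpow_le_zpow_right₀ (by linarith)
        push_cast; linarith
      have hAL : ∀ e ∈ A, ℓ e ≤ L := fun e he =>
        hℓ e (Finset.mem_union_left _ (Finset.mem_union_left _ he))
      have hDL : ∀ e ∈ D, ℓ e ≤ L := fun e he => hℓ e (Finset.mem_union_right _ he)
      have key := dead_le A D ℓ L hAL hDL g hg0 hmono ε hε.le hcount
      have hAsum : ∑ e ∈ A, g (ℓ e) = ∑ e ∈ A, w e :=
        Finset.sum_congr rfl fun e he => (hwA e he).symm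
      have hDsum : ∑ e ∈ D, w e ≤ ∑ e ∈ D, g (ℓ e) :=
        Finset.sum_le_sum fun e he => (hwPD e (Finset.mem_union_right _ he)).2
      rw [hAsum] at key
      linarith
    -- Step 5: split the universe
    have hsplit : ∑ e ∈ A ∪ P ∪ D, w e = ∑ e ∈ A ∪ P, w e + ∑ e ∈ D, w e :=
      Finset.sum_union (Finset.disjoint_union_left.mpr ⟨hAD, hPD⟩)
    have h3 : ∑ e ∈ A ∪ P ∪ D, w e ≤ (1 + 2 * ε) * C := by
      have h2εA : 2 * ε * ∑ e ∈ A, w e ≤ 2 * ε * C :=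
        mul_le_mul_of_nonneg_left hAw (by linarith)
      rw [hsplit]; nlinarith [hcov, hDw, h2εA]
    -- Combine
    have hb : ∑ s ∈ 𝓣, c s ≤ (1 + ε) * ((f : ℝ) * ((1 + 2 * ε) * C)) := by
      refine h1.trans (mul_le_mul_of_nonneg_left ?_ h1ε.le)
      exact h2.trans (mul_le_mul_of_nonneg_left h3 hf0)
    have hfc : 0 ≤ (f : ℝ) * C := mul_nonneg hf0 hC
    nlinarith [hb, hfc, mul_nonneg (mul_nonneg (mul_nonneg hε.le
      (by linarith : (0:ℝ) ≤ 1 - ε)) hf0) hC]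
end
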